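/- Let G=(V,E) be a weighted graph with boundary ∂=A⊔B⊔C in which every connected component contains a boundary vertex, and let n≥2 be an integer. Then: (i) the integer program min Σ_{e∈E} w(e)ρ(e) over ρ:E→ℤ_{≥0} subject to ρ(L)≥1 for every path L∈𝒫_{A,B}∪𝒫_{A,C}∪𝒫_{B,C} has optimal value 𝒜_s(A:B:C), the minimal triway cut area with unit tensions s=(1,1,1); (ii) its linear relaxation, with ρ:E→ℝ_{≥0} and the same constraints, has optimal value ½(𝒜(A:B∪C)+𝒜(B:A∪C)+𝒜(C:A∪B)). -/

import Mathlib

open scoped Classical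

noncomputable section

namespace RTN

/-! ## Set partitions -/

/-- Number of blocks of a set partition (as an integer). -/
def nb {α : Type*} (p : Setoid α) : ℤ := Nat.card (Quotient p)

/-- The partition distance `d(p,q) = #(p) + #(q) - 2 #(p ⊔ q)`. -/
def pdist {α : Type*} (p q : Setoid α) : ℤ := nb p + nb q - 2 * nb (p ⊔ q)

lemma pdist_comm {α : Type*} (p q : Setoid α) : pdist p q = pdist q p := by
  unfold pdist
  rw [sup_comm p q]
  ring

/-- `k` is a singlet (block of size one) of the partition `p`. -/
def IsSinglet {α : Type*} (p : Setoid α) (k : α) : Prop := ∀ y, p.r k y → y = k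

/-- The number of singlets `#₁(p)` of a partition. -/
def nS {α : Type*} (p : Setoid α) : ℤ := Nat.card {k : α // IsSinglet p k}

/-- The singlet distance `d₁(s₁,s₂) = #₁(s₁) + #₁(s₂) - 2 #₁(s₁ ⊔ s₂)`. -/
def sdist {α : Type*} (s₁ s₂ : Setoid α) : ℤ := nS s₁ + nS s₂ - 2 * nS (s₁ ⊔ s₂)

/-- The singlet pattern `s(p)`: the coarsest partition whose singlets are exactly
those of `p` (all non-singlet elements lie in one block). -/
def spat {α : Type*} (p : Setoid α) : Setoid α where
  r x y := x = y ∨ (¬ IsSinglet p x ∧ ¬ IsSinglet p y)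
  iseqv := by
    refine ⟨fun x => Or.inl rfl, ?_, ?_⟩
    · intro x y h
      rcases h with rfl | ⟨hx, hy⟩
      · exact Or.inl rfl
      · exact Or.inr ⟨hy, hx⟩
    · intro x y z h1 h2
      rcases h1 with rfl | ⟨hx, hy⟩
      · exact h2
      · rcases h2 with rfl | ⟨_, hz⟩
        · exact Or.inr ⟨hx, hy⟩
        · exact Or.inr ⟨hx, hz⟩

/-- The bit `b^k(p)`: `0` if `p` has a singlet at `k`, else `1`. -/
def bbit {α : Type*} (p : Setoid α) (k : α) : ℤ := if IsSinglet p k then 0 else 1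

/-- The size of the block of `p` containing `x`. -/
def blockSize {α : Type*} (p : Setoid α) (x : α) : ℕ := Nat.card {y : α // p.r x y}

noncomputable instance {α : Type*} [Finite α] (s : Setoid α) : Fintype (Quotient s) :=
  Fintype.ofFinite _

/-! ## Permutations -/

/-- The partition of `α` into orbits (cycles) of a permutation. -/
def orbitSetoid {α : Type*} (g : Equiv.Perm α) : Setoid α where
  r x y := ∃ k : ℤ, (g ^ k) x = y
  iseqv := by
    refine ⟨fun x => ⟨0, by simp⟩, ?_, ?_⟩
    · rintro x y ⟨k, rfl⟩
      exact ⟨-k, by simp [← Equiv.Perm.mul_apply, ← zpow_add]⟩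
    · rintro x y z ⟨k, rfl⟩ ⟨l, rfl⟩
      exact ⟨l + k, by rw [zpow_add, Equiv.Perm.mul_apply]⟩

/-- The number of cycles `#(g)` of a permutation (fixed points included). -/
def ncyc {α : Type*} (g : Equiv.Perm α) : ℤ := nb (orbitSetoid g)

/-- The Cayley distance `d(g,h) = N - #(g h⁻¹)`. -/
def cayley {α : Type*} [Fintype α] (g h : Equiv.Perm α) : ℤ :=
  (Fintype.card α : ℤ) - ncyc (g * h⁻¹)

lemma orbitSetoid_inv {α : Type*} (g : Equiv.Perm α) : orbitSetoid g⁻¹ = orbitSetoid g := by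
  apply Setoid.ext
  intro x y
  constructor
  · rintro ⟨k, hk⟩
    exact ⟨-k, by rw [← inv_zpow']; exact hk⟩
  · rintro ⟨k, hk⟩
    exact ⟨-k, by rw [inv_zpow', neg_neg]; exact hk⟩

lemma cayley_comm {α : Type*} [Fintype α] (g h : Equiv.Perm α) : cayley g h = cayley h g := by
  unfold cayley ncyc
  rw [show h * g⁻¹ = (g * h⁻¹)⁻¹ by rw [mul_inv_rev, inv_inv], orbitSetoid_inv]

/-- Coarse graining of a partition `p` by the blocks of `P(g₀)`: the partition of the set
of blocks of `P(g₀)` induced by `p ⊔ P(g₀)`. -/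
def coarse {α : Type*} (g₀ : Equiv.Perm α) (p : Setoid α) :
    Setoid (Quotient (orbitSetoid g₀)) where
  r u v := ∃ x y : α, Quotient.mk (orbitSetoid g₀) x = u ∧ Quotient.mk (orbitSetoid g₀) y = v ∧
    (p ⊔ orbitSetoid g₀).r x y
  iseqv := by
    refine ⟨?_, ?_, ?_⟩
    · intro u
      obtain ⟨x, rfl⟩ := Quotient.exists_rep u
      exact ⟨x, x, rfl, rfl, (p ⊔ orbitSetoid g₀).iseqv.refl x⟩
    · rintro u v ⟨x, y, hx, hy, hxy⟩
      exact ⟨y, x, hy, hx, (p ⊔ orbitSetoid g₀).iseqv.symm hxy⟩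
    · rintro u v w ⟨x, y, hx, hy, hxy⟩ ⟨y', z, hy', hz, hyz⟩
      refine ⟨x, z, hx, hz, ?_⟩
      have h1 : (orbitSetoid g₀).r y y' := Quotient.exact (hy.trans hy'.symm)
      have h2 : (p ⊔ orbitSetoid g₀).r y y' :=
        (le_sup_right : orbitSetoid g₀ ≤ p ⊔ orbitSetoid g₀) h1
      exact (p ⊔ orbitSetoid g₀).iseqv.trans hxy
        ((p ⊔ orbitSetoid g₀).iseqv.trans h2 hyz)

/-- The coarse graining `q_{g₀}(g) ∈ P_{#(g₀)}` of a permutation `g`. -/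
def qc {α : Type*} (g₀ g : Equiv.Perm α) : Setoid (Quotient (orbitSetoid g₀)) :=
  coarse g₀ (orbitSetoid g)

/-! ## Standard reflected-entropy boundary elements -/

/-- `g_B`, the product of `n` disjoint `m`-cycles `(k,ℓ) ↦ (k,ℓ+1)`. -/
def gB (n m : ℕ) : Equiv.Perm (Fin n × Fin m) :=
  Equiv.prodCongr (Equiv.refl (Fin n)) (finRotate m)

/-- `γ`, cyclically shifting `k ↦ k+1` on the elements with `ℓ` in the lower half,
fixing the rest. -/
def gamma (n m : ℕ) : Equiv.Perm (Fin n × Fin m) where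
  toFun x := if m / 2 ≤ (x.2 : ℕ) then (finRotate n x.1, x.2) else x
  invFun x := if m / 2 ≤ (x.2 : ℕ) then ((finRotate n).symm x.1, x.2) else x
  left_inv := by
    intro x
    by_cases h : m / 2 ≤ (x.2 : ℕ) <;> simp only [h, ite_true, ite_false, Equiv.symm_apply_apply, Equiv.apply_symm_apply, if_false]
  right_inv := by
    intro x
    by_cases h : m / 2 ≤ (x.2 : ℕ) <;> simp only [h, ite_true, ite_false, Equiv.symm_apply_apply, Equiv.apply_symm_apply, if_false]

/-- `g_A = γ⁻¹ g_B γ`. -/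
def gA (n m : ℕ) : Equiv.Perm (Fin n × Fin m) :=
  (gamma n m)⁻¹ * gB n m * gamma n m

/-- For even `m`, `Fin m` splits into an upper and a lower half. -/
def halfEquiv (m : ℕ) (hm : m % 2 = 0) : Fin 2 × Fin (m / 2) ≃ Fin m :=
  finProdFinEquiv.trans (finCongr (by omega))

/-- `X`, the product of the `2n` disjoint `(m/2)`-cycles cyclically permuting the
upper and the lower half of each block `k`. -/
def Xel (n m : ℕ) (hm : m % 2 = 0) : Equiv.Perm (Fin n × Fin m) :=
  Equiv.prodCongr (Equiv.refl (Fin n))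
    ((halfEquiv m hm).permCongr
      (Equiv.prodCongr (Equiv.refl (Fin 2)) (finRotate (m / 2))))

/-- The set of blocks of `P(X)`; it has `2n` elements. -/
abbrev BX (n m : ℕ) (hm : m % 2 = 0) := Quotient (orbitSetoid (Xel n m hm))

/-- `q_A = q_X(g_A) ∈ P_{2n}`. -/
def qAel (n m : ℕ) (hm : m % 2 = 0) : Setoid (BX n m hm) :=
  qc (Xel n m hm) (gA n m)

/-- `q_B = q_X(g_B) ∈ P_{2n}`. -/
def qBel (n m : ℕ) (hm : m % 2 = 0) : Setoid (BX n m hm) :=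
  qc (Xel n m hm) (gB n m)

/-! ## Doubled elements (two copies) -/

/-- Two copies of the index set `{1,…,mn}`. -/
abbrev DIdx (n m : ℕ) := (Fin n × Fin m) ⊕ (Fin n × Fin m)

/-- `g̃_A = g_A ⊕ g_A`. -/
def gAt (n m : ℕ) : Equiv.Perm (DIdx n m) := Equiv.sumCongr (gA n m) (gA n m)

/-- `g̃_B = g_B ⊕ g_B`. -/
def gBt (n m : ℕ) : Equiv.Perm (DIdx n m) := Equiv.sumCongr (gB n m) (gB n m)

/-- `X̃ = X ⊕ X`. -/
def Xt (n m : ℕ) (hm : m % 2 = 0) : Equiv.Perm (DIdx n m) :=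
  Equiv.sumCongr (Xel n m hm) (Xel n m hm)

/-- The set of blocks of `P(X̃)`; it has `4n` elements. -/
abbrev BXt (n m : ℕ) (hm : m % 2 = 0) := Quotient (orbitSetoid (Xt n m hm))

/-- `q̃_A = q_{X̃}(g̃_A) ∈ P_{4n}`. -/
def qAt (n m : ℕ) (hm : m % 2 = 0) : Setoid (BXt n m hm) :=
  qc (Xt n m hm) (gAt n m)

/-- `q̃_B = q_{X̃}(g̃_B) ∈ P_{4n}`. -/
def qBt (n m : ℕ) (hm : m % 2 = 0) : Setoid (BXt n m hm) :=
  qc (Xt n m hm) (gBt n m)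

/-- A block of `P(X̃)` lies in the first copy. -/
def inCopy1 {n m : ℕ} {hm : m % 2 = 0} (u : BXt n m hm) : Prop :=
  ∃ x, Quotient.mk (orbitSetoid (Xt n m hm)) (Sum.inl x) = u

/-- `#₁⁽¹⁾(q)`: the number of singlets of `q` among the first-copy positions. -/
def nS1 {n m : ℕ} {hm : m % 2 = 0} (q : Setoid (BXt n m hm)) : ℤ :=
  Nat.card {u : BXt n m hm // IsSinglet q u ∧ inCopy1 u}

/-- `#₁⁽²⁾(q)`: the number of singlets of `q` among the second-copy positions. -/
def nS2 {n m : ℕ} {hm : m % 2 = 0} (q : Setoid (BXt n m hm)) : ℤ :=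
  Nat.card {u : BXt n m hm // IsSinglet q u ∧ ¬ inCopy1 u}

/-- `τ ∈ P_{4n}`, the two-block partition separating the two copies. -/
def tau (n m : ℕ) (hm : m % 2 = 0) : Setoid (BXt n m hm) where
  r u v := inCopy1 u ↔ inCopy1 v
  iseqv := ⟨fun _ => Iff.rfl, Iff.symm, Iff.trans⟩

/-! ## Graphs, cuts and optimization programs -/

variable {V : Type*}

/-- Sum of an edge function along (the edge list of) a walk, with multiplicity. -/
def wkSum {β : Type*} [AddCommMonoid β] {G : SimpleGraph V} {x y : V}
    (f : Sym2 V → β) (L : G.Walk x y) : β :=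
  (L.edges.map f).sum

variable [Fintype V]

/-- Sum of an edge weight function over a set of edges. -/
def wsum (f : Sym2 V → ℝ) (S : Set (Sym2 V)) : ℝ :=
  ∑ e ∈ Finset.univ.filter (· ∈ S), f e

/-- The cut surface `μ(r)`: edges of `G` with one endpoint in `r`, the other outside. -/
def mu (G : SimpleGraph V) (r : Set V) : Set (Sym2 V) :=
  {e | e ∈ G.edgeSet ∧ ∃ x y, e = s(x, y) ∧ x ∈ r ∧ y ∉ r}

/-- `μ(r₁:r₂)`: edges of `G` with an endpoint in `r₁` and an endpoint in `r₂`. -/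
def mu2 (G : SimpleGraph V) (r₁ r₂ : Set V) : Set (Sym2 V) :=
  {e | e ∈ G.edgeSet ∧ ∃ x y, e = s(x, y) ∧ x ∈ r₁ ∧ y ∈ r₂}

/-- `r` is a cut for `X : Y`. -/
def IsCut (X Y r : Set V) : Prop := X ⊆ r ∧ Y ⊆ rᶜ

/-- The minimal cut area `𝒜(X:Y)`. -/
def minCut (G : SimpleGraph V) (w : Sym2 V → ℝ) (X Y : Set V) : ℝ :=
  sInf {a | ∃ r : Set V, IsCut X Y r ∧ a = wsum w (mu G r)}

/-- `(α,β,γ)` is a triway cut for `(A,B,C)`. -/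
def IsTriway (A B C α β γ : Set V) : Prop :=
  α ∪ β ∪ γ = Set.univ ∧ Disjoint α β ∧ Disjoint β γ ∧ Disjoint α γ ∧
    A ⊆ α ∧ B ⊆ β ∧ C ⊆ γ

/-- The area of a triway cut with tensions `(t_{A:B}, t_{B:C}, t_{C:A})`. -/
def triArea (G : SimpleGraph V) (w : Sym2 V → ℝ) (tAB tBC tCA : ℝ)
    (α β γ : Set V) : ℝ :=
  tAB * wsum w (mu2 G α β) + tBC * wsum w (mu2 G β γ) + tCA * wsum w (mu2 G γ α)

/-- The minimal triway cut area `𝒜_t(A:B:C)`. -/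
def triCut (G : SimpleGraph V) (w : Sym2 V → ℝ) (tAB tBC tCA : ℝ)
    (A B C : Set V) : ℝ :=
  sInf {a | ∃ α β γ : Set V, IsTriway A B C α β γ ∧ a = triArea G w tAB tBC tCA α β γ}

/-- Boundary data: `∂ = A ⊔ B ⊔ C` (pairwise disjoint). -/
def Bdy (A B C : Set V) : Prop := Disjoint A B ∧ Disjoint A C ∧ Disjoint B C

/-! ### The permutation optimization `R` -/

/-- The symmetric edge function induced by the Cayley distance of a vertex
configuration of permutations. -/
def permE {ι : Type*} [Fintype ι] (g : V → Equiv.Perm ι) : Sym2 V → ℝ :=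
  Sym2.lift ⟨fun x y => (cayley (g x) (g y) : ℝ),
    fun x y => congrArg Int.cast (cayley_comm (g x) (g y))⟩

/-- The free energy `R(g) = Σ_e w(e) d(g(x),g(y))`. -/
def Renergy {ι : Type*} [Fintype ι] (G : SimpleGraph V) (w : Sym2 V → ℝ)
    (g : V → Equiv.Perm ι) : ℝ :=
  wsum (fun e => w e * permE g e) G.edgeSet

/-- The optimal value `R` of the permutation optimization. -/
def Rval {ι : Type*} [Fintype ι] (G : SimpleGraph V) (w : Sym2 V → ℝ)
    (A B C : Set V) (g₁ g₂ : Equiv.Perm ι) : ℝ :=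
  sInf {a | ∃ g : V → Equiv.Perm ι,
    (∀ v ∈ A, g v = g₁) ∧ (∀ v ∈ B, g v = g₂) ∧ (∀ v ∈ C, g v = 1) ∧
    a = Renergy G w g}

/-! ### The set-partition optimization `Q` -/

/-- The symmetric integer edge function induced by the partition distance of a vertex
configuration of partitions. -/
def partEZ {κ : Type*} (q : V → Setoid κ) : Sym2 V → ℤ :=
  Sym2.lift ⟨fun x y => pdist (q x) (q y), fun x y => pdist_comm (q x) (q y)⟩

/-- The free energy `Q(q) = Σ_e w(e) d(q(x),q(y))`. -/
def Qenergy {κ : Type*} (G : SimpleGraph V) (w : Sym2 V → ℝ)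
    (q : V → Setoid κ) : ℝ :=
  wsum (fun e => w e * (partEZ q e : ℝ)) G.edgeSet

/-- The optimal value `Q` of the set-partition optimization. -/
def Qval {κ : Type*} (G : SimpleGraph V) (w : Sym2 V → ℝ)
    (A B C : Set V) (q₁ q₂ : Setoid κ) : ℝ :=
  sInf {a | ∃ q : V → Setoid κ,
    (∀ v ∈ A, q v = q₁) ∧ (∀ v ∈ B, q v = q₂) ∧ (∀ v ∈ C, q v = ⊥) ∧
    a = Qenergy G w q}

/-! ### The Boolean optimization `B` -/

/-- The Hamming distance between two bit strings. -/
def ham {κ : Type*} [Fintype κ] (b₁ b₂ : κ → Bool) : ℤ :=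
  ∑ k : κ, if b₁ k = b₂ k then 0 else 1

/-- The bit string `b(q)` of a partition: `false` exactly at singlets. -/
def bvec {κ : Type*} (p : Setoid κ) : κ → Bool :=
  fun u => if IsSinglet p u then false else true

/-- Feasibility of `r` for the Boolean program at configuration `b`. -/
def Bfeas {κ : Type*} [Fintype κ] (G : SimpleGraph V) (A B : Set V) (n : ℕ)
    (b : V → κ → Bool) (r : Sym2 V → ℕ) : Prop :=
  (∀ x ∈ A, ∀ y ∈ B, ∀ L : G.Walk x y,
    2 ∣ wkSum (fun e => (r e : ℤ)) L ∧
    wkSum (fun e => (r e : ℤ)) L ≥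
      2 * ((n : ℤ) - if ∀ v ∈ L.support, ∀ k, b v k = true then 1 else 0)) ∧
  (∀ x y : V, G.Adj x y → (r s(x, y) : ℤ) ≥ ⌈(ham (b x) (b y) : ℚ) / 2⌉)

/-- The inner Boolean optimum `B(b)` at a fixed Boolean configuration `b`. -/
def BvalAt {κ : Type*} [Fintype κ] (G : SimpleGraph V) (w : Sym2 V → ℝ)
    (A B : Set V) (n : ℕ) (b : V → κ → Bool) : ℝ :=
  sInf {a | ∃ r : Sym2 V → ℕ, Bfeas G A B n b r ∧
    a = wsum (fun e => w e * (r e : ℝ)) G.edgeSet}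

/-- The optimal value `B` of the Boolean optimization. -/
def Bval (κ : Type*) [Fintype κ] (G : SimpleGraph V) (w : Sym2 V → ℝ)
    (A B C : Set V) (n : ℕ) : ℝ :=
  sInf {a | ∃ b : V → κ → Bool,
    (∀ v ∈ A ∪ B, ∀ k, b v k = true) ∧ (∀ v ∈ C, ∀ k, b v k = false) ∧
    ∃ r : Sym2 V → ℕ, Bfeas G A B n b r ∧
      a = wsum (fun e => w e * (r e : ℝ)) G.edgeSet}

/-! ### The integer program `I` -/

/-- Feasibility of `(ρ,σ)` for the integer program. -/
def IPfeas (G : SimpleGraph V) (A B C : Set V) (n : ℕ) (ρ σ : Sym2 V → ℕ) : Prop :=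
  (∀ x ∈ A, ∀ y ∈ B, ∀ L : G.Walk x y,
    2 ∣ wkSum (fun e => (σ e : ℤ) + (ρ e : ℤ)) L ∧
    wkSum (fun e => (σ e : ℤ) + (ρ e : ℤ)) L ≥
      2 * ((n : ℤ) - if wkSum (fun e => (ρ e : ℤ)) L = 0 then 1 else 0)) ∧
  (∀ x ∈ A ∪ B, ∀ y ∈ C, ∀ L : G.Walk x y,
    wkSum (fun e => (ρ e : ℤ)) L ≥ (n : ℤ))

/-- The objective of the integer program. -/
def IPobj (G : SimpleGraph V) (w : Sym2 V → ℝ) (ρ σ : Sym2 V → ℕ) : ℝ :=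
  wsum (fun e => w e * ((σ e : ℝ) + (ρ e : ℝ))) G.edgeSet

/-- The optimal value `I` of the integer program. -/
def Ival (G : SimpleGraph V) (w : Sym2 V → ℝ) (A B C : Set V) (n : ℕ) : ℝ :=
  sInf {a | ∃ ρ σ : Sym2 V → ℕ, IPfeas G A B C n ρ σ ∧ a = IPobj G w ρ σ}

/-! ### The ℓ-intersecting cut problem `M` -/

/-- Feasibility for the `ℓ`-intersecting cut problem with boundary sets
`Γ₀, …, Γ_ℓ` and `C`, for a half-integer valued `ϱ`. -/
def Mfeas (G : SimpleGraph V) (Γ : ℕ → Set V) (ℓ : ℕ) (C : Set V)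
    (ϱ : Sym2 V → ℚ) : Prop :=
  (∀ e, ∃ j : ℕ, ϱ e = (j : ℚ) / 2) ∧
  (∀ k k' : ℕ, k ≤ ℓ → k' ≤ ℓ → ∀ x ∈ Γ k, ∀ y ∈ Γ k', ∀ L : G.Walk x y,
    ∃ j : ℕ, wkSum ϱ L = |(k : ℚ) - (k' : ℚ)| + (j : ℚ)) ∧
  (∀ k : ℕ, k ≤ ℓ → ∀ x ∈ Γ k, ∀ y ∈ C, ∀ L : G.Walk x y,
    ∃ j : ℕ, wkSum ϱ L = (ℓ : ℚ) / 2 + (j : ℚ))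

/-- The objective of the `ℓ`-intersecting cut problem. -/
def Mobj (G : SimpleGraph V) (w : Sym2 V → ℝ) (ϱ : Sym2 V → ℚ) : ℝ :=
  wsum (fun e => w e * (ϱ e : ℝ)) G.edgeSet

/-- The optimal value `M` of the `ℓ`-intersecting cut problem. -/
def Mval (G : SimpleGraph V) (w : Sym2 V → ℝ) (Γ : ℕ → Set V) (ℓ : ℕ)
    (C : Set V) : ℝ :=
  sInf {a | ∃ ϱ : Sym2 V → ℚ, Mfeas G Γ ℓ C ϱ ∧ a = Mobj G w ϱ}

/-- The complementary reduced graph `G^c`: the edges of `G` not lying entirely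
inside `V'`. -/
def reducedGraph (G : SimpleGraph V) (V' : Set V) : SimpleGraph V where
  Adj x y := G.Adj x y ∧ ¬ (x ∈ V' ∧ y ∈ V')
  symm := by
    refine ⟨?_⟩
    intro x y h
    exact ⟨h.1.symm, fun hc => h.2 ⟨hc.2, hc.1⟩⟩
  loopless := by
    refine ⟨?_⟩
    intro x h
    exact G.loopless.irrefl x h.1

end RTN

namespace RTN

variable {V : Type*}

lemma wkSum_nil {β : Type*} [AddCommMonoid β] {G : SimpleGraph V} {x : V}
    (f : Sym2 V → β) : wkSum f (SimpleGraph.Walk.nil : G.Walk x x) = 0 := by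
  simp [wkSum]

lemma wkSum_reverse {β : Type*} [AddCommMonoid β] {G : SimpleGraph V} {x y : V}
    (f : Sym2 V → β) (p : G.Walk x y) : wkSum f p.reverse = wkSum f p := by
  unfold wkSum
  rw [SimpleGraph.Walk.edges_reverse, List.map_reverse, List.sum_reverse]

lemma wkSum_append {β : Type*} [AddCommMonoid β] {G : SimpleGraph V} {x y z : V}
    (f : Sym2 V → β) (p : G.Walk x y) (q : G.Walk y z) :
    wkSum f (p.append q) = wkSum f p + wkSum f q := by
  unfold wkSum
  rw [SimpleGraph.Walk.edges_append, List.map_append, List.sum_append]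

lemma wkSum_concat {β : Type*} [AddCommMonoid β] {G : SimpleGraph V} {x y z : V}
    (f : Sym2 V → β) (p : G.Walk x y) (h : G.Adj y z) :
    wkSum f (p.concat h) = wkSum f p + f s(y, z) := by
  unfold wkSum
  rw [SimpleGraph.Walk.edges_concat]
  simp

lemma wkSum_nonneg' {β : Type*} [AddCommMonoid β] [PartialOrder β] [IsOrderedAddMonoid β] {G : SimpleGraph V} {x y : V}
    {f : Sym2 V → β} (hf : ∀ e, 0 ≤ f e) (L : G.Walk x y) : 0 ≤ wkSum f L :=
  List.sum_nonneg (by rintro a ha; obtain ⟨e, _, rfl⟩ := List.mem_map.1 ha; exact hf e)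

lemma le_wkSum' {β : Type*} [AddCommMonoid β] [PartialOrder β] [IsOrderedAddMonoid β] {G : SimpleGraph V} {x y : V}
    {f : Sym2 V → β} (hf : ∀ e, 0 ≤ f e) (L : G.Walk x y) {e : Sym2 V} (he : e ∈ L.edges) :
    f e ≤ wkSum f L :=
  List.single_le_sum (by rintro a ha; obtain ⟨e', _, rfl⟩ := List.mem_map.1 ha; exact hf e')
    _ (List.mem_map_of_mem (f := f) he)

lemma crossing {G : SimpleGraph V} {r : Set V} :
    ∀ {x y : V}, x ∈ r → y ∉ r → ∀ L : G.Walk x y, ∃ e ∈ L.edges, e ∈ mu G r := by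
  intro x y hx hy L
  induction L with
  | nil => exact absurd hx hy
  | @cons a b c hab p ih =>
    by_cases hb : b ∈ r
    · obtain ⟨e, he, hmu⟩ := ih hb hy
      exact ⟨e, List.mem_cons_of_mem _ he, hmu⟩
    · exact ⟨s(a, b), List.mem_cons_self, ⟨hab, a, b, rfl, hx, hb⟩⟩

variable [Fintype V]
lemma wsum_nonneg {w : Sym2 V → ℝ} (hw : ∀ e, 0 ≤ w e) (S : Set (Sym2 V)) :
    0 ≤ wsum w S :=
  Finset.sum_nonneg fun e _ => hw e

/-- The three cut surfaces of a "partition into three parts" are pairwise disjoint,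
and membership forces distinct parts. -/
lemma mu2_mem_parts {G : SimpleGraph V} {α β : Set V} {e : Sym2 V}
    (h : e ∈ mu2 G α β) : e ∈ G.edgeSet ∧ ∃ x y, e = s(x, y) ∧ x ∈ α ∧ y ∈ β := h

/-- generic: sum over union of three disjoint edge sets inside edgeSet -/
lemma wsum_three {G : SimpleGraph V} {w : Sym2 V → ℝ} {g : Sym2 V → ℝ}
    {S₁ S₂ S₃ : Set (Sym2 V)} (hw : ∀ e, 0 ≤ w e) (hg : ∀ e, 0 ≤ g e)
    (h1 : S₁ ⊆ G.edgeSet) (h2 : S₂ ⊆ G.edgeSet) (h3 : S₃ ⊆ G.edgeSet)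
    (d12 : ∀ e, e ∈ S₁ → e ∈ S₂ → False) (d13 : ∀ e, e ∈ S₁ → e ∈ S₃ → False)
    (d23 : ∀ e, e ∈ S₂ → e ∈ S₃ → False)
    (hge : ∀ e, e ∈ S₁ ∪ S₂ ∪ S₃ → 1 ≤ g e) :
    wsum w S₁ + wsum w S₂ + wsum w S₃ ≤ wsum (fun e => w e * g e) G.edgeSet := by
  unfold wsum
  rw [Finset.sum_filter, Finset.sum_filter, Finset.sum_filter, Finset.sum_filter,
    ← Finset.sum_add_distrib, ← Finset.sum_add_distrib]
  apply Finset.sum_le_sum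
  intro e _
  by_cases he1 : e ∈ S₁
  · have : e ∈ G.edgeSet := h1 he1
    have hni2 : e ∉ S₂ := fun h => d12 e he1 h
    have hni3 : e ∉ S₃ := fun h => d13 e he1 h
    simp only [he1, hni2, hni3, this, if_true, if_false]
    have := hge e (Or.inl (Or.inl he1))
    nlinarith [hw e]
  · by_cases he2 : e ∈ S₂
    · have : e ∈ G.edgeSet := h2 he2
      have hni3 : e ∉ S₃ := fun h => d23 e he2 h
      simp only [he1, he2, hni3, this, if_true, if_false]
      have := hge e (Or.inl (Or.inr he2))
      nlinarith [hw e]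
    · by_cases he3 : e ∈ S₃
      · have : e ∈ G.edgeSet := h3 he3
        simp only [he1, he2, he3, this, if_true, if_false]
        have := hge e (Or.inr he3)
        nlinarith [hw e]
      · simp only [he1, he2, he3, if_false]
        by_cases hE : e ∈ G.edgeSet <;> simp [hE] <;> nlinarith [hw e, hg e]

/-- equality version when g is the indicator of the union -/
lemma wsum_three_eq {G : SimpleGraph V} {w : Sym2 V → ℝ}
    {S₁ S₂ S₃ : Set (Sym2 V)}
    (h1 : S₁ ⊆ G.edgeSet) (h2 : S₂ ⊆ G.edgeSet) (h3 : S₃ ⊆ G.edgeSet)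
    (d12 : ∀ e, e ∈ S₁ → e ∈ S₂ → False) (d13 : ∀ e, e ∈ S₁ → e ∈ S₃ → False)
    (d23 : ∀ e, e ∈ S₂ → e ∈ S₃ → False) :
    wsum (fun e => w e * (if e ∈ S₁ ∪ S₂ ∪ S₃ then (1:ℝ) else 0)) G.edgeSet
      = wsum w S₁ + wsum w S₂ + wsum w S₃ := by
  unfold wsum
  rw [Finset.sum_filter, Finset.sum_filter, Finset.sum_filter, Finset.sum_filter,
    ← Finset.sum_add_distrib, ← Finset.sum_add_distrib]
  apply Finset.sum_congr rfl
  intro e _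
  by_cases he1 : e ∈ S₁
  · have : e ∈ G.edgeSet := h1 he1
    have hni2 : e ∉ S₂ := fun h => d12 e he1 h
    have hni3 : e ∉ S₃ := fun h => d13 e he1 h
    have hu : e ∈ S₁ ∪ S₂ ∪ S₃ := Or.inl (Or.inl he1)
    simp [he1, hni2, hni3, this, hu]
  · by_cases he2 : e ∈ S₂
    · have : e ∈ G.edgeSet := h2 he2
      have hni3 : e ∉ S₃ := fun h => d23 e he2 h
      have hu : e ∈ S₁ ∪ S₂ ∪ S₃ := Or.inl (Or.inr he2)
      simp [he1, he2, hni3, this, hu]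
    · by_cases he3 : e ∈ S₃
      · have : e ∈ G.edgeSet := h3 he3
        have hu : e ∈ S₁ ∪ S₂ ∪ S₃ := Or.inr he3
        simp [he1, he2, he3, this, hu]
      · have hu : e ∉ S₁ ∪ S₂ ∪ S₃ := by
          rintro (( h | h) | h) <;> tauto
        by_cases hE : e ∈ G.edgeSet <;> simp [he1, he2, he3, hu, hE]

omit [Fintype V] in
lemma wkSum_cons {β : Type*} [AddCommMonoid β] {G : SimpleGraph V} {x y z : V}
    (f : Sym2 V → β) (h : G.Adj x y) (p : G.Walk y z) :
    wkSum f (SimpleGraph.Walk.cons h p) = f s(x, y) + wkSum f p := by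
  unfold wkSum
  rw [SimpleGraph.Walk.edges_cons, List.map_cons, List.sum_cons]

omit [Fintype V] in
lemma one_le_wkSum {G : SimpleGraph V} {f : Sym2 V → ℤ} (hf : ∀ e, 1 ≤ f e)
    {x y : V} (hxy : x ≠ y) (L : G.Walk x y) : 1 ≤ wkSum f L := by
  cases L with
  | nil => exact absurd rfl hxy
  | @cons _ b _ h p =>
    rw [wkSum_cons]
    have h0 : 0 ≤ wkSum f p := wkSum_nonneg' (fun e => le_trans zero_le_one (hf e)) p
    have h1 := hf s(x, b)
    linarith

lemma wsum_congr {f g : Sym2 V → ℝ} (h : ∀ e, f e = g e) (S : Set (Sym2 V)) :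
    wsum f S = wsum g S :=
  Finset.sum_congr rfl fun e _ => h e

lemma part_one {G : SimpleGraph V} {w : Sym2 V → ℝ}
    (hw : ∀ e, 0 ≤ w e) {A B C : Set V}
    (hAB : Disjoint A B) (hAC : Disjoint A C) (hBC : Disjoint B C) :
    sInf {a | ∃ ρ : Sym2 V → ℕ,
        ((∀ x ∈ A, ∀ y ∈ B, ∀ L : G.Walk x y, 1 ≤ wkSum (fun e => (ρ e : ℤ)) L) ∧
         (∀ x ∈ A, ∀ y ∈ C, ∀ L : G.Walk x y, 1 ≤ wkSum (fun e => (ρ e : ℤ)) L) ∧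
         (∀ x ∈ B, ∀ y ∈ C, ∀ L : G.Walk x y, 1 ≤ wkSum (fun e => (ρ e : ℤ)) L)) ∧
        a = wsum (fun e => w e * (ρ e : ℝ)) G.edgeSet}
      = triCut G w 1 1 1 A B C := by
  have ipBdd : BddBelow {a | ∃ ρ : Sym2 V → ℕ,
      ((∀ x ∈ A, ∀ y ∈ B, ∀ L : G.Walk x y, 1 ≤ wkSum (fun e => (ρ e : ℤ)) L) ∧
       (∀ x ∈ A, ∀ y ∈ C, ∀ L : G.Walk x y, 1 ≤ wkSum (fun e => (ρ e : ℤ)) L) ∧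
       (∀ x ∈ B, ∀ y ∈ C, ∀ L : G.Walk x y, 1 ≤ wkSum (fun e => (ρ e : ℤ)) L)) ∧
      a = wsum (fun e => w e * (ρ e : ℝ)) G.edgeSet} := by
    refine ⟨0, ?_⟩
    rintro a ⟨ρ, -, rfl⟩
    exact wsum_nonneg (fun e => mul_nonneg (hw e) (by positivity)) _
  have ipNE : Set.Nonempty {a | ∃ ρ : Sym2 V → ℕ,
      ((∀ x ∈ A, ∀ y ∈ B, ∀ L : G.Walk x y, 1 ≤ wkSum (fun e => (ρ e : ℤ)) L) ∧
       (∀ x ∈ A, ∀ y ∈ C, ∀ L : G.Walk x y, 1 ≤ wkSum (fun e => (ρ e : ℤ)) L) ∧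
       (∀ x ∈ B, ∀ y ∈ C, ∀ L : G.Walk x y, 1 ≤ wkSum (fun e => (ρ e : ℤ)) L)) ∧
      a = wsum (fun e => w e * (ρ e : ℝ)) G.edgeSet} := by
    refine ⟨_, fun _ => 1, ⟨?_, ?_, ?_⟩, rfl⟩
    · intro x hx y hy L
      exact one_le_wkSum (by simp) (fun h => Set.disjoint_left.mp hAB hx (by rw [h]; exact hy)) L
    · intro x hx y hy L
      exact one_le_wkSum (by simp) (fun h => Set.disjoint_left.mp hAC hx (by rw [h]; exact hy)) L
    · intro x hx y hy L
      exact one_le_wkSum (by simp) (fun h => Set.disjoint_left.mp hBC hx (by rw [h]; exact hy)) L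
  have triBdd : BddBelow {a | ∃ α β γ : Set V, IsTriway A B C α β γ ∧
      a = triArea G w 1 1 1 α β γ} := by
    refine ⟨0, ?_⟩
    rintro a ⟨α, β, γ, -, rfl⟩
    have h1 := wsum_nonneg hw (mu2 G α β)
    have h2 := wsum_nonneg hw (mu2 G β γ)
    have h3 := wsum_nonneg hw (mu2 G γ α)
    simp only [triArea, one_mul]
    linarith
  have triNE : Set.Nonempty {a | ∃ α β γ : Set V, IsTriway A B C α β γ ∧
      a = triArea G w 1 1 1 α β γ} := by
    refine ⟨_, (B ∪ C)ᶜ, B, C, ⟨?_, ?_, hBC, ?_, ?_, subset_rfl, subset_rfl⟩, rfl⟩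
    · ext v
      by_cases h1 : v ∈ B <;> by_cases h2 : v ∈ C <;> simp [h1, h2]
    · exact Set.disjoint_left.mpr fun v hv hvB => hv (Or.inl hvB)
    · exact Set.disjoint_left.mpr fun v hv hvC => hv (Or.inr hvC)
    · intro a ha h
      rcases h with h | h
      · exact Set.disjoint_left.mp hAB ha h
      · exact Set.disjoint_left.mp hAC ha h
  rw [triCut]
  apply le_antisymm
  · -- sInf IP ≤ triCut
    apply le_csInf triNE
    rintro a ⟨α, β, γ, ⟨huniv, dαβ, dβγ, dαγ, hsA, hsB, hsC⟩, rfl⟩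
    classical
    set S₁ := mu2 G α β with hS₁
    set S₂ := mu2 G β γ with hS₂
    set S₃ := mu2 G γ α with hS₃
    set ρ : Sym2 V → ℕ := fun e => if e ∈ S₁ ∪ S₂ ∪ S₃ then 1 else 0 with hρdef
    have hρcast : ∀ e, ((ρ e : ℤ)) = if e ∈ S₁ ∪ S₂ ∪ S₃ then 1 else 0 := by
      intro e
      simp only [hρdef, apply_ite (fun n : ℕ => (n : ℤ)), Nat.cast_one, Nat.cast_zero]
    have hfnn : ∀ e, (0:ℤ) ≤ (ρ e : ℤ) := fun e => Int.natCast_nonneg _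
    have hcrossα : ∀ {x y : V}, x ∈ α → y ∉ α → ∀ L : G.Walk x y,
        1 ≤ wkSum (fun e => (ρ e : ℤ)) L := by
      intro x y hx hy L
      obtain ⟨e, heL, heE, u, v', he, hu, hv'⟩ := crossing hx hy L
      subst he
      have hv'' : v' ∈ β ∪ γ := by
        have h0 := Set.mem_univ v'
        rw [← huniv] at h0
        rcases h0 with (h | h) | h
        · exact absurd h hv'
        · exact Or.inl h
        · exact Or.inr h
      have heU : s(u, v') ∈ S₁ ∪ S₂ ∪ S₃ := by
        rcases hv'' with h | h
        · exact Or.inl (Or.inl ⟨heE, u, v', rfl, hu, h⟩)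
        · exact Or.inr ⟨heE, v', u, Sym2.eq_swap.symm, h, hu⟩
      calc (1:ℤ) = (ρ s(u, v') : ℤ) := by rw [hρcast]; simp [heU]
        _ ≤ wkSum (fun e => (ρ e : ℤ)) L := le_wkSum' hfnn L heL
    have hcrossβ : ∀ {x y : V}, x ∈ β → y ∉ β → ∀ L : G.Walk x y,
        1 ≤ wkSum (fun e => (ρ e : ℤ)) L := by
      intro x y hx hy L
      obtain ⟨e, heL, heE, u, v', he, hu, hv'⟩ := crossing hx hy L
      subst he
      have hv'' : v' ∈ α ∪ γ := by
        have h0 := Set.mem_univ v'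
        rw [← huniv] at h0
        rcases h0 with (h | h) | h
        · exact Or.inl h
        · exact absurd h hv'
        · exact Or.inr h
      have heU : s(u, v') ∈ S₁ ∪ S₂ ∪ S₃ := by
        rcases hv'' with h | h
        · exact Or.inl (Or.inl ⟨heE, v', u, Sym2.eq_swap.symm, h, hu⟩)
        · exact Or.inl (Or.inr ⟨heE, u, v', rfl, hu, h⟩)
      calc (1:ℤ) = (ρ s(u, v') : ℤ) := by rw [hρcast]; simp [heU]
        _ ≤ wkSum (fun e => (ρ e : ℤ)) L := le_wkSum' hfnn L heL
    have d12 : ∀ e, e ∈ S₁ → e ∈ S₂ → False := by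
      rintro e ⟨_, x, y, rfl, hx, hy⟩ ⟨_, x', y', hee, hx', hy'⟩
      rcases Sym2.eq_iff.mp hee with ⟨rfl, rfl⟩ | ⟨rfl, rfl⟩
      · exact Set.disjoint_left.mp dαβ hx hx'
      · exact Set.disjoint_left.mp dαγ hx hy'
    have d13 : ∀ e, e ∈ S₁ → e ∈ S₃ → False := by
      rintro e ⟨_, x, y, rfl, hx, hy⟩ ⟨_, x', y', hee, hx', hy'⟩
      rcases Sym2.eq_iff.mp hee with ⟨rfl, rfl⟩ | ⟨rfl, rfl⟩
      · exact Set.disjoint_left.mp dαγ hx hx'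
      · exact Set.disjoint_left.mp dβγ hy hx'
    have d23 : ∀ e, e ∈ S₂ → e ∈ S₃ → False := by
      rintro e ⟨_, x, y, rfl, hx, hy⟩ ⟨_, x', y', hee, hx', hy'⟩
      rcases Sym2.eq_iff.mp hee with ⟨rfl, rfl⟩ | ⟨rfl, rfl⟩
      · exact Set.disjoint_left.mp dβγ hx hx'
      · exact Set.disjoint_left.mp dαβ hy' hx
    refine csInf_le ipBdd ⟨ρ, ⟨?_, ?_, ?_⟩, ?_⟩
    · intro x hx y hy L
      exact hcrossα (hsA hx) (fun h => Set.disjoint_left.mp dαβ h (hsB hy)) L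
    · intro x hx y hy L
      exact hcrossα (hsA hx) (fun h => Set.disjoint_left.mp dαγ h (hsC hy)) L
    · intro x hx y hy L
      exact hcrossβ (hsB hx) (fun h => Set.disjoint_left.mp dβγ h (hsC hy)) L
    · have hval : ∀ e, (w e * (ρ e : ℝ)) =
          w e * (if e ∈ S₁ ∪ S₂ ∪ S₃ then (1:ℝ) else 0) := by
        intro e
        simp only [hρdef, apply_ite (fun n : ℕ => (n : ℝ)), Nat.cast_one, Nat.cast_zero]
      calc triArea G w 1 1 1 α β γ
          = wsum w S₁ + wsum w S₂ + wsum w S₃ := by simp [triArea, hS₁, hS₂, hS₃]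
        _ = wsum (fun e => w e * (if e ∈ S₁ ∪ S₂ ∪ S₃ then (1:ℝ) else 0)) G.edgeSet :=
            (wsum_three_eq (fun e he => he.1) (fun e he => he.1) (fun e he => he.1)
              d12 d13 d23).symm
        _ = wsum (fun e => w e * (ρ e : ℝ)) G.edgeSet :=
            wsum_congr (fun e => (hval e).symm) _
  · -- triCut ≤ sInf IP
    apply le_csInf ipNE
    rintro a ⟨ρ, ⟨hABc, hACc, hBCc⟩, rfl⟩
    classical
    set f : Sym2 V → ℤ := fun e => (ρ e : ℤ) with hfdef
    have hf0 : ∀ e, 0 ≤ f e := fun e => Int.natCast_nonneg _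
    set ZB : Set V := {v | ∃ x ∈ B, ∃ L : G.Walk x v, wkSum f L = 0} with hZBdef
    set ZC : Set V := {v | ∃ x ∈ C, ∃ L : G.Walk x v, wkSum f L = 0} with hZCdef
    have hBZB : B ⊆ ZB := fun b hb => ⟨b, hb, .nil, by simp [wkSum]⟩
    have hCZC : C ⊆ ZC := fun c hc => ⟨c, hc, .nil, by simp [wkSum]⟩
    have hAZB : ∀ a' ∈ A, a' ∉ ZB := by
      rintro a' ha' ⟨b, hb, L, hL⟩
      have := hABc a' ha' b hb L.reverse
      rw [wkSum_reverse, hL] at this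
      norm_num at this
    have hAZC : ∀ a' ∈ A, a' ∉ ZC := by
      rintro a' ha' ⟨c, hc, L, hL⟩
      have := hACc a' ha' c hc L.reverse
      rw [wkSum_reverse, hL] at this
      norm_num at this
    have hCZB : ∀ c ∈ C, c ∉ ZB := by
      rintro c hc ⟨b, hb, L, hL⟩
      have := hBCc b hb c hc L
      rw [hL] at this
      norm_num at this
    have htransB : ∀ {u v : V}, G.Adj u v → f s(u, v) = 0 → u ∈ ZB → v ∈ ZB := by
      rintro u v h h0 ⟨b, hb, L, hL⟩
      exact ⟨b, hb, L.concat h, by rw [wkSum_concat, hL, h0, add_zero]⟩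
    have htransC : ∀ {u v : V}, G.Adj u v → f s(u, v) = 0 → u ∈ ZC → v ∈ ZC := by
      rintro u v h h0 ⟨c, hc, L, hL⟩
      exact ⟨c, hc, L.concat h, by rw [wkSum_concat, hL, h0, add_zero]⟩
    set α : Set V := (ZB ∪ ZC)ᶜ with hαdef
    set β : Set V := ZB with hβdef
    set γ : Set V := ZC \ ZB with hγdef
    have htri : IsTriway A B C α β γ := by
      refine ⟨?_, ?_, ?_, ?_, ?_, hBZB, ?_⟩
      · apply Set.eq_univ_of_forall
        intro v
        by_cases h1 : v ∈ ZB
        · exact Or.inl (Or.inr h1)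
        by_cases h2 : v ∈ ZC
        · exact Or.inr ⟨h2, h1⟩
        · refine Or.inl (Or.inl ?_)
          rintro (h | h)
          exacts [h1 h, h2 h]
      · exact Set.disjoint_left.mpr fun v hv hvB => hv (Or.inl hvB)
      · exact Set.disjoint_left.mpr fun v hvB hvγ => hvγ.2 hvB
      · exact Set.disjoint_left.mpr fun v hv hvγ => hv (Or.inr hvγ.1)
      · intro a' ha' h
        rcases h with h | h
        exacts [hAZB a' ha' h, hAZC a' ha' h]
      · exact fun c hc => ⟨hCZC hc, hCZB c hc⟩
    obtain ⟨-, dαβ, dβγ, dαγ, -, -, -⟩ := id htri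
    refine le_trans (csInf_le triBdd ⟨α, β, γ, htri, rfl⟩) ?_
    have d12 : ∀ e, e ∈ mu2 G α β → e ∈ mu2 G β γ → False := by
      rintro e ⟨_, x, y, rfl, hx, hy⟩ ⟨_, x', y', hee, hx', hy'⟩
      rcases Sym2.eq_iff.mp hee with ⟨rfl, rfl⟩ | ⟨rfl, rfl⟩
      · exact Set.disjoint_left.mp dαβ hx hx'
      · exact Set.disjoint_left.mp dαγ hx hy'
    have d13 : ∀ e, e ∈ mu2 G α β → e ∈ mu2 G γ α → False := by
      rintro e ⟨_, x, y, rfl, hx, hy⟩ ⟨_, x', y', hee, hx', hy'⟩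
      rcases Sym2.eq_iff.mp hee with ⟨rfl, rfl⟩ | ⟨rfl, rfl⟩
      · exact Set.disjoint_left.mp dαγ hx hx'
      · exact Set.disjoint_left.mp dβγ hy hx'
    have d23 : ∀ e, e ∈ mu2 G β γ → e ∈ mu2 G γ α → False := by
      rintro e ⟨_, x, y, rfl, hx, hy⟩ ⟨_, x', y', hee, hx', hy'⟩
      rcases Sym2.eq_iff.mp hee with ⟨rfl, rfl⟩ | ⟨rfl, rfl⟩
      · exact Set.disjoint_left.mp dβγ hx hx'
      · exact Set.disjoint_left.mp dαβ hy' hx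
    have hge : ∀ e, e ∈ mu2 G α β ∪ mu2 G β γ ∪ mu2 G γ α → 1 ≤ ((ρ e : ℝ)) := by
      intro e he
      by_contra hlt
      push_neg at hlt
      have hρ0 : ρ e = 0 := by
        have : ρ e < 1 := by exact_mod_cast hlt
        omega
      have hf0e : f e = 0 := by simp [hfdef, hρ0]
      rcases he with (⟨heE, x, y, hexy, hx, hy⟩ | ⟨heE, x, y, hexy, hx, hy⟩) |
        ⟨heE, x, y, hexy, hx, hy⟩ <;> subst hexy
      · have hadj : G.Adj x y := (SimpleGraph.mem_edgeSet G).mp heE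
        exact hx (Or.inl (htransB hadj.symm (by rw [Sym2.eq_swap]; exact hf0e) hy))
      · have hadj : G.Adj x y := (SimpleGraph.mem_edgeSet G).mp heE
        exact hy.2 (htransB hadj hf0e hx)
      · have hadj : G.Adj x y := (SimpleGraph.mem_edgeSet G).mp heE
        exact hy (Or.inr (htransC hadj hf0e hx.1))
    calc triArea G w 1 1 1 α β γ
        = wsum w (mu2 G α β) + wsum w (mu2 G β γ) + wsum w (mu2 G γ α) := by
          simp [triArea]
      _ ≤ wsum (fun e => w e * (ρ e : ℝ)) G.edgeSet :=
          wsum_three hw (fun e => by positivity) (fun e he => he.1) (fun e he => he.1)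
            (fun e he => he.1) d12 d13 d23 hge
/-- separation property -/
def Sep (G : SimpleGraph V) (ρ : Sym2 V → ℝ) (X Y : Set V) : Prop :=
  ∀ x ∈ X, ∀ y ∈ Y, ∀ L : G.Walk x y, 1 ≤ wkSum ρ L

lemma Sep.symm {G : SimpleGraph V} {ρ : Sym2 V → ℝ} {X Y : Set V}
    (h : Sep G ρ X Y) : Sep G ρ Y X := fun y hy x hx L => by
  have := h x hx y hy L.reverse
  rwa [wkSum_reverse] at this

/-- capped distance function -/
noncomputable def dd (G : SimpleGraph V) (ρ : Sym2 V → ℝ) (X : Set V) (v : V) : ℝ :=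
  sInf (insert (1/2 : ℝ) {a | ∃ x ∈ X, ∃ L : G.Walk x v, a = wkSum ρ L})

section dd
variable {G : SimpleGraph V} {ρ : Sym2 V → ℝ} (hρ : ∀ e, 0 ≤ ρ e) {X Y : Set V}
include hρ

lemma dd_bdd (v : V) : ∀ a ∈ insert (1/2 : ℝ) {a | ∃ x ∈ X, ∃ L : G.Walk x v, a = wkSum ρ L},
    0 ≤ a := by
  rintro a (rfl | ⟨x, hx, L, rfl⟩)
  · norm_num
  · exact wkSum_nonneg' hρ L

lemma dd_nonneg (v : V) : 0 ≤ dd G ρ X v :=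
  le_csInf ⟨1/2, Set.mem_insert _ _⟩ (dd_bdd hρ v)

lemma dd_le_half (v : V) : dd G ρ X v ≤ 1/2 :=
  csInf_le ⟨0, dd_bdd hρ v⟩ (Set.mem_insert _ _)

lemma dd_le_walk {v x : V} (hx : x ∈ X) (L : G.Walk x v) : dd G ρ X v ≤ wkSum ρ L :=
  csInf_le ⟨0, dd_bdd hρ v⟩ (Set.mem_insert_of_mem _ ⟨x, hx, L, rfl⟩)

lemma dd_of_mem {x : V} (hx : x ∈ X) : dd G ρ X x = 0 :=
  le_antisymm (by simpa [wkSum] using dd_le_walk hρ hx SimpleGraph.Walk.nil) (dd_nonneg hρ x)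

lemma dd_lip {u v : V} (h : G.Adj u v) : dd G ρ X v ≤ dd G ρ X u + ρ s(u, v) := by
  rw [← sub_le_iff_le_add]
  apply le_csInf ⟨1/2, Set.mem_insert _ _⟩
  rintro a (rfl | ⟨x, hx, L, rfl⟩)
  · have := dd_le_half hρ (G := G) (X := X) v
    have := hρ s(u, v)
    linarith
  · have := dd_le_walk hρ hx (L.concat h)
    rw [sub_le_iff_le_add]
    calc dd G ρ X v ≤ wkSum ρ (L.concat h) := this
    _ = wkSum ρ L + ρ s(u,v) := by
        unfold wkSum
        rw [SimpleGraph.Walk.edges_concat]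
        simp

lemma dd_lip_abs {u v : V} (h : G.Adj u v) :
    |dd G ρ X u - dd G ρ X v| ≤ ρ s(u, v) := by
  rw [abs_sub_le_iff]
  constructor
  · have := dd_lip hρ (X := X) h.symm
    rw [Sym2.eq_swap] at this
    linarith
  · have := dd_lip hρ (X := X) h
    linarith

lemma dd_sep_vertex (hsep : Sep G ρ X Y) (v : V) :
    ¬ (dd G ρ X v < 1/2 ∧ dd G ρ Y v < 1/2) := by
  rintro ⟨hX, hY⟩
  obtain ⟨a, ha, haa⟩ := exists_lt_of_csInf_lt ⟨1/2, Set.mem_insert _ _⟩ hX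
  obtain ⟨b, hb, hbb⟩ := exists_lt_of_csInf_lt ⟨1/2, Set.mem_insert _ _⟩ hY
  rcases ha with rfl | ⟨x, hx, L₁, rfl⟩
  · linarith
  rcases hb with rfl | ⟨y, hy, L₂, rfl⟩
  · linarith
  have := hsep x hx y hy (L₁.append L₂.reverse)
  rw [wkSum_append, wkSum_reverse] at this
  linarith

lemma dd_sep_edge (hsep : Sep G ρ X Y) {u v : V} (h : G.Adj u v)
    (hX : dd G ρ X u < 1/2) (hY : dd G ρ Y v < 1/2) :
    1 ≤ dd G ρ X u + ρ s(u, v) + dd G ρ Y v := by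
  by_contra hc
  push_neg at hc
  set ε := (1 - (dd G ρ X u + ρ s(u, v) + dd G ρ Y v)) / 2 with hε
  have hε0 : 0 < ε := by simp [hε]; linarith
  have h1 : dd G ρ X u < min (dd G ρ X u + ε) (1/2) := lt_min (by linarith) hX
  have h2 : dd G ρ Y v < min (dd G ρ Y v + ε) (1/2) := lt_min (by linarith) hY
  obtain ⟨a, ha, haa⟩ := exists_lt_of_csInf_lt ⟨1/2, Set.mem_insert _ _⟩ h1
  obtain ⟨b, hb, hbb⟩ := exists_lt_of_csInf_lt ⟨1/2, Set.mem_insert _ _⟩ h2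
  rw [lt_min_iff] at haa hbb
  rcases ha with rfl | ⟨x, hx, L₁, rfl⟩
  · linarith [haa.2]
  rcases hb with rfl | ⟨y, hy, L₂, rfl⟩
  · linarith [hbb.2]
  have := hsep x hx y hy (L₁.append (SimpleGraph.Walk.cons h L₂.reverse))
  rw [wkSum_append, wkSum_cons, wkSum_reverse] at this
  have haa1 := haa.1
  have hbb1 := hbb.1
  simp only [hε] at haa1 hbb1
  linarith

end dd
/-- two-active case -/
lemma helper2 {xu xv yu yv ρ : ℝ}
    (hxu : xu ≤ 1/2) (hxv : xv ≤ 1/2) (hyu : yu ≤ 1/2) (hyv : yv ≤ 1/2)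
    (hlx : |xu - xv| ≤ ρ)
    (hu : ¬ (xu < 1/2 ∧ yu < 1/2)) (hv : ¬ (xv < 1/2 ∧ yv < 1/2))
    (hc1 : xu < 1/2 → yv < 1/2 → 1 ≤ xu + ρ + yv)
    (hc2 : yu < 1/2 → xv < 1/2 → 1 ≤ yu + ρ + xv)
    (hax : xu < 1/2 ∨ xv < 1/2) (hay : yu < 1/2 ∨ yv < 1/2) :
    |xu - xv| + |yu - yv| ≤ ρ := by
  rcases hax with hx | hx <;> rcases hay with hy | hy
  · exact absurd ⟨hx, hy⟩ hu
  · have hxv' : xv = 1/2 := le_antisymm hxv (not_lt.1 fun h => hv ⟨h, hy⟩)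
    have hyu' : yu = 1/2 := le_antisymm hyu (not_lt.1 fun h => hu ⟨hx, h⟩)
    have := hc1 hx hy
    rw [abs_of_nonpos (by linarith), abs_of_nonneg (by linarith)]
    linarith
  · have hxu' : xu = 1/2 := le_antisymm hxu (not_lt.1 fun h => hu ⟨h, hy⟩)
    have hyv' : yv = 1/2 := le_antisymm hyv (not_lt.1 fun h => hv ⟨hx, h⟩)
    have := hc2 hy hx
    rw [abs_of_nonneg (by linarith), abs_of_nonpos (by linarith)]
    linarith
  · exact absurd ⟨hx, hy⟩ hv

/-- the per-edge key arithmetic lemma -/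
lemma key_arith {au av bu bv cu cv ρ : ℝ}
    (hau : au ≤ 1/2) (hav : av ≤ 1/2) (hbu : bu ≤ 1/2) (hbv : bv ≤ 1/2)
    (hcu : cu ≤ 1/2) (hcv : cv ≤ 1/2) (hρ : 0 ≤ ρ)
    (hla : |au - av| ≤ ρ) (hlb : |bu - bv| ≤ ρ) (hlc : |cu - cv| ≤ ρ)
    (huab : ¬ (au < 1/2 ∧ bu < 1/2)) (huac : ¬ (au < 1/2 ∧ cu < 1/2))
    (hubc : ¬ (bu < 1/2 ∧ cu < 1/2))
    (hvab : ¬ (av < 1/2 ∧ bv < 1/2)) (hvac : ¬ (av < 1/2 ∧ cv < 1/2))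
    (hvbc : ¬ (bv < 1/2 ∧ cv < 1/2))
    (cab : au < 1/2 → bv < 1/2 → 1 ≤ au + ρ + bv)
    (cba : bu < 1/2 → av < 1/2 → 1 ≤ bu + ρ + av)
    (cac : au < 1/2 → cv < 1/2 → 1 ≤ au + ρ + cv)
    (cca : cu < 1/2 → av < 1/2 → 1 ≤ cu + ρ + av)
    (cbc : bu < 1/2 → cv < 1/2 → 1 ≤ bu + ρ + cv)
    (ccb : cu < 1/2 → bv < 1/2 → 1 ≤ cu + ρ + bv) :
    |au - av| + |bu - bv| + |cu - cv| ≤ ρ := by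
  by_cases hA : au < 1/2 ∨ av < 1/2
  · by_cases hB : bu < 1/2 ∨ bv < 1/2
    · by_cases hC : cu < 1/2 ∨ cv < 1/2
      · exfalso
        rcases hA with h1 | h1 <;> rcases hB with h2 | h2 <;> rcases hC with h3 | h3
        · exact huab ⟨h1, h2⟩
        · exact huab ⟨h1, h2⟩
        · exact huac ⟨h1, h3⟩
        · exact hvbc ⟨h2, h3⟩
        · exact hubc ⟨h2, h3⟩
        · exact hvac ⟨h1, h3⟩
        · exact hvab ⟨h1, h2⟩
        · exact hvab ⟨h1, h2⟩
      · push_neg at hC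
        have : |cu - cv| = 0 := by
          rw [le_antisymm hcu hC.1, le_antisymm hcv hC.2, sub_self, abs_zero]
        rw [this, add_zero]
        exact helper2 hau hav hbu hbv hla huab hvab cab cba hA hB
    · push_neg at hB
      have hb0 : |bu - bv| = 0 := by
        rw [le_antisymm hbu hB.1, le_antisymm hbv hB.2, sub_self, abs_zero]
      by_cases hC : cu < 1/2 ∨ cv < 1/2
      · rw [hb0, add_zero]
        exact helper2 hau hav hcu hcv hla huac hvac cac cca hA hC
      · push_neg at hC
        have : |cu - cv| = 0 := by
          rw [le_antisymm hcu hC.1, le_antisymm hcv hC.2, sub_self, abs_zero]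
        rw [this, hb0]
        linarith
  · push_neg at hA
    have ha0 : |au - av| = 0 := by
      rw [le_antisymm hau hA.1, le_antisymm hav hA.2, sub_self, abs_zero]
    by_cases hB : bu < 1/2 ∨ bv < 1/2
    · by_cases hC : cu < 1/2 ∨ cv < 1/2
      · rw [ha0]
        rw [zero_add]
        exact helper2 hbu hbv hcu hcv hlb hubc hvbc cbc ccb hB hC
      · push_neg at hC
        have : |cu - cv| = 0 := by
          rw [le_antisymm hcu hC.1, le_antisymm hcv hC.2, sub_self, abs_zero]
        rw [this, ha0]
        linarith
    · push_neg at hB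
      have hb0 : |bu - bv| = 0 := by
        rw [le_antisymm hbu hB.1, le_antisymm hbv hB.2, sub_self, abs_zero]
      rw [ha0, hb0]
      have := abs_nonneg (cu - cv)
      linarith

open MeasureTheory in
lemma avg_bound {ι : Type*} (s : Finset ι) {c : ℝ} (hc : 0 < c) (lo hi wt : ι → ℝ)
    (hwt : ∀ i ∈ s, 0 ≤ wt i) (hlo : ∀ i ∈ s, 0 ≤ lo i) (hlohi : ∀ i ∈ s, lo i ≤ hi i)
    (hhi : ∀ i ∈ s, hi i ≤ c) (m : ℝ)
    (hm : ∀ t ∈ Set.Ioo (0:ℝ) c,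
      m ≤ ∑ i ∈ s, Set.indicator (Set.Ico (lo i) (hi i)) (fun _ => wt i) t) :
    c * m ≤ ∑ i ∈ s, wt i * (hi i - lo i) := by
  have hvol : ∀ i ∈ s, volume (Set.Ico (lo i) (hi i) ∩ Set.Ioo (0:ℝ) c)
      = ENNReal.ofReal (hi i - lo i) := by
    intro i hi'
    apply le_antisymm
    · calc volume (Set.Ico (lo i) (hi i) ∩ Set.Ioo (0:ℝ) c)
          ≤ volume (Set.Ico (lo i) (hi i)) := measure_mono Set.inter_subset_left
        _ = ENNReal.ofReal (hi i - lo i) := Real.volume_Ico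
    · calc ENNReal.ofReal (hi i - lo i) = volume (Set.Ioo (lo i) (hi i)) :=
          Real.volume_Ioo.symm
        _ ≤ volume (Set.Ico (lo i) (hi i) ∩ Set.Ioo (0:ℝ) c) := by
            apply measure_mono
            intro t ht
            exact ⟨⟨le_of_lt ht.1, ht.2⟩,
              lt_of_le_of_lt (hlo i hi') ht.1, lt_of_lt_of_le ht.2 (hhi i hi')⟩
  have hint : ∀ i ∈ s, IntegrableOn
      (fun t => Set.indicator (Set.Ico (lo i) (hi i)) (fun _ => wt i) t)
      (Set.Ioo (0:ℝ) c) volume := by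
    intro i hi'
    rw [IntegrableOn, integrable_indicator_iff measurableSet_Ico]
    refine integrableOn_const ?_
    apply ne_of_lt
    rw [Measure.restrict_apply measurableSet_Ico]
    calc volume (Set.Ico (lo i) (hi i) ∩ Set.Ioo (0:ℝ) c)
        ≤ volume (Set.Ico (lo i) (hi i)) := measure_mono Set.inter_subset_left
      _ = ENNReal.ofReal (hi i - lo i) := Real.volume_Ico
      _ < ⊤ := ENNReal.ofReal_lt_top
  have hFi : IntegrableOn
      (fun t => ∑ i ∈ s, Set.indicator (Set.Ico (lo i) (hi i)) (fun _ => wt i) t)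
      (Set.Ioo (0:ℝ) c) volume := integrable_finset_sum s hint
  have h1 : c * m = ∫ t in Set.Ioo (0:ℝ) c, m := by
    rw [setIntegral_const, measureReal_def, Real.volume_Ioo, sub_zero, ENNReal.toReal_ofReal hc.le,
      smul_eq_mul]
  have h2 : (∫ t in Set.Ioo (0:ℝ) c, m) ≤
      ∫ t in Set.Ioo (0:ℝ) c,
        ∑ i ∈ s, Set.indicator (Set.Ico (lo i) (hi i)) (fun _ => wt i) t := by
    apply setIntegral_mono_on (integrableOn_const (by
      rw [Real.volume_Ioo]; exact ENNReal.ofReal_ne_top)) hFi measurableSet_Ioo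
    exact hm
  have h3 : (∫ t in Set.Ioo (0:ℝ) c,
      ∑ i ∈ s, Set.indicator (Set.Ico (lo i) (hi i)) (fun _ => wt i) t)
      = ∑ i ∈ s, wt i * (hi i - lo i) := by
    rw [integral_finset_sum s hint]
    apply Finset.sum_congr rfl
    intro i hi'
    rw [setIntegral_indicator measurableSet_Ico, setIntegral_const, measureReal_def, Set.inter_comm,
      hvol i hi', ENNReal.toReal_ofReal (sub_nonneg.2 (hlohi i hi')), smul_eq_mul,
      mul_comm]
  rw [h1]
  exact le_trans h2 (le_of_eq h3)

omit [Fintype V] in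
lemma one_le_wkSum_real {G : SimpleGraph V} {f : Sym2 V → ℝ} (hf : ∀ e, 1 ≤ f e)
    {x y : V} (hxy : x ≠ y) (L : G.Walk x y) : 1 ≤ wkSum f L := by
  cases L with
  | nil => exact absurd rfl hxy
  | @cons _ b _ h p =>
    rw [wkSum_cons]
    have h0 : 0 ≤ wkSum f p := wkSum_nonneg' (fun e => le_trans zero_le_one (hf e)) p
    have h1 := hf s(x, b)
    linarith

omit [Fintype V] in
lemma wkSum_avg3 {G : SimpleGraph V} {x y : V} (f₁ f₂ f₃ : Sym2 V → ℝ) (L : G.Walk x y) :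
    wkSum (fun e => (f₁ e + f₂ e + f₃ e) / 2) L
      = (wkSum f₁ L + wkSum f₂ L + wkSum f₃ L) / 2 := by
  induction L with
  | nil => simp [wkSum]
  | cons h p ih =>
    rw [wkSum_cons, wkSum_cons, wkSum_cons, wkSum_cons, ih]
    ring

lemma wsum_avg3 (f₁ f₂ f₃ : Sym2 V → ℝ) (S : Set (Sym2 V)) :
    wsum (fun e => (f₁ e + f₂ e + f₃ e) / 2) S
      = (wsum f₁ S + wsum f₂ S + wsum f₃ S) / 2 := by
  unfold wsum
  rw [← Finset.sum_div, Finset.sum_add_distrib, Finset.sum_add_distrib]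

lemma wsum_indicator {G : SimpleGraph V} {S : Set (Sym2 V)} (hS : S ⊆ G.edgeSet)
    (w : Sym2 V → ℝ) :
    wsum (fun e => w e * (if e ∈ S then (1:ℝ) else 0)) G.edgeSet = wsum w S := by
  unfold wsum
  rw [Finset.sum_filter, Finset.sum_filter]
  apply Finset.sum_congr rfl
  intro e _
  by_cases heS : e ∈ S
  · have : e ∈ G.edgeSet := hS heS
    simp [heS, this]
  · by_cases heE : e ∈ G.edgeSet <;> simp [heS, heE]

lemma minCut_attained {G : SimpleGraph V} (w : Sym2 V → ℝ) {X Y : Set V}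
    (hXY : Disjoint X Y) :
    ∃ r : Set V, IsCut X Y r ∧ minCut G w X Y = wsum w (mu G r) := by
  have hfin : ({a | ∃ r : Set V, IsCut X Y r ∧ a = wsum w (mu G r)}).Finite := by
    apply Set.Finite.subset (Set.finite_range (fun r : Set V => wsum w (mu G r)))
    rintro a ⟨r, -, rfl⟩
    exact ⟨r, rfl⟩
  have hne : Set.Nonempty {a | ∃ r : Set V, IsCut X Y r ∧ a = wsum w (mu G r)} :=
    ⟨_, Yᶜ, ⟨fun x hx hy => Set.disjoint_left.mp hXY hx hy, fun y hy => by
      simp [hy]⟩, rfl⟩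
  obtain ⟨r, hr, heq⟩ := hne.csInf_mem hfin
  exact ⟨r, hr, heq⟩

/-- symmetric min of a vertex function on an edge -/
def s2min (f : V → ℝ) : Sym2 V → ℝ :=
  Sym2.lift ⟨fun u v => min (f u) (f v), fun _ _ => min_comm _ _⟩

/-- symmetric max of a vertex function on an edge -/
def s2max (f : V → ℝ) : Sym2 V → ℝ :=
  Sym2.lift ⟨fun u v => max (f u) (f v), fun _ _ => max_comm _ _⟩

omit [Fintype V] in
lemma mu_threshold {G : SimpleGraph V} (f : V → ℝ) (t : ℝ) {e : Sym2 V}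
    (he : e ∈ G.edgeSet) :
    e ∈ mu G {v | f v ≤ t} ↔ s2min f e ≤ t ∧ t < s2max f e := by
  induction e using Sym2.inductionOn with
  | hf u v =>
    simp only [s2min, s2max, Sym2.lift_mk]
    constructor
    · rintro ⟨-, x, y, hee, hx, hy⟩
      rcases Sym2.eq_iff.mp hee with ⟨rfl, rfl⟩ | ⟨rfl, rfl⟩
      · exact ⟨le_trans (min_le_left _ _) hx,
          lt_of_lt_of_le (not_le.1 hy) (le_max_right _ _)⟩
      · exact ⟨le_trans (min_le_right _ _) hx,
          lt_of_lt_of_le (not_le.1 hy) (le_max_left _ _)⟩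
    · rintro ⟨h1, h2⟩
      rcases le_total (f u) (f v) with h | h
      · rw [min_eq_left h] at h1
        rw [max_eq_right h] at h2
        exact ⟨he, u, v, rfl, h1, not_le.2 h2⟩
      · rw [min_eq_right h] at h1
        rw [max_eq_left h] at h2
        exact ⟨he, v, u, Sym2.eq_swap.symm, h1, not_le.2 h2⟩

lemma wsum_spec (S : Set (Sym2 V)) : ∃ s : Finset (Sym2 V),
    (∀ e, e ∈ s ↔ e ∈ S) ∧ ∀ f : Sym2 V → ℝ, wsum f S = ∑ e ∈ s, f e :=
  ⟨Finset.univ.filter (· ∈ S), fun e => by simp, fun f => rfl⟩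

lemma wsum_mu_threshold {G : SimpleGraph V} (w : Sym2 V → ℝ) (f : V → ℝ) (t : ℝ) :
    wsum w (mu G {v | f v ≤ t}) =
      wsum (fun e =>
        Set.indicator (Set.Ico (s2min f e) (s2max f e)) (fun _ => w e) t) G.edgeSet := by
  unfold wsum
  rw [Finset.sum_filter, Finset.sum_filter]
  apply Finset.sum_congr rfl
  intro e _
  by_cases he : e ∈ G.edgeSet
  · simp only [he, if_true, Set.indicator_apply, Set.mem_Ico, mu_threshold f t he]
  · have hnm : e ∉ mu G {v | f v ≤ t} := fun h => he h.1
    simp [he, hnm]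

omit [Fintype V] in
lemma dd_half_of_target {G : SimpleGraph V} {ρ : Sym2 V → ℝ} {X Y : Set V}
    (hsep : Sep G ρ X Y) {y : V} (hy : y ∈ Y) : 1/2 ≤ dd G ρ X y := by
  apply le_csInf ⟨1/2, Set.mem_insert _ _⟩
  rintro a (rfl | ⟨x, hx, L, rfl⟩)
  · exact le_refl _
  · have := hsep x hx y hy L
    linarith

lemma part_two {G : SimpleGraph V} {w : Sym2 V → ℝ} (hw : ∀ e, 0 ≤ w e) {A B C : Set V}
    (hAB : Disjoint A B) (hAC : Disjoint A C) (hBC : Disjoint B C) :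
    sInf {a | ∃ ρ : Sym2 V → ℝ, (∀ e, 0 ≤ ρ e) ∧
        ((∀ x ∈ A, ∀ y ∈ B, ∀ L : G.Walk x y, 1 ≤ wkSum ρ L) ∧
         (∀ x ∈ A, ∀ y ∈ C, ∀ L : G.Walk x y, 1 ≤ wkSum ρ L) ∧
         (∀ x ∈ B, ∀ y ∈ C, ∀ L : G.Walk x y, 1 ≤ wkSum ρ L)) ∧
        a = wsum (fun e => w e * ρ e) G.edgeSet}
      = (minCut G w A (B ∪ C) + minCut G w B (A ∪ C) + minCut G w C (A ∪ B)) / 2 := by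
  have lpBdd : BddBelow {a | ∃ ρ : Sym2 V → ℝ, (∀ e, 0 ≤ ρ e) ∧
      ((∀ x ∈ A, ∀ y ∈ B, ∀ L : G.Walk x y, 1 ≤ wkSum ρ L) ∧
       (∀ x ∈ A, ∀ y ∈ C, ∀ L : G.Walk x y, 1 ≤ wkSum ρ L) ∧
       (∀ x ∈ B, ∀ y ∈ C, ∀ L : G.Walk x y, 1 ≤ wkSum ρ L)) ∧
      a = wsum (fun e => w e * ρ e) G.edgeSet} := by
    refine ⟨0, ?_⟩
    rintro a ⟨ρ, hρ0, -, rfl⟩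
    exact wsum_nonneg (fun e => mul_nonneg (hw e) (hρ0 e)) _
  have lpNE : Set.Nonempty {a | ∃ ρ : Sym2 V → ℝ, (∀ e, 0 ≤ ρ e) ∧
      ((∀ x ∈ A, ∀ y ∈ B, ∀ L : G.Walk x y, 1 ≤ wkSum ρ L) ∧
       (∀ x ∈ A, ∀ y ∈ C, ∀ L : G.Walk x y, 1 ≤ wkSum ρ L) ∧
       (∀ x ∈ B, ∀ y ∈ C, ∀ L : G.Walk x y, 1 ≤ wkSum ρ L)) ∧
      a = wsum (fun e => w e * ρ e) G.edgeSet} := by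
    refine ⟨_, fun _ => 1, fun _ => zero_le_one, ⟨?_, ?_, ?_⟩, rfl⟩
    · intro x hx y hy L
      exact one_le_wkSum_real (fun _ => le_refl 1)
        (fun h => Set.disjoint_left.mp hAB hx (by rw [h]; exact hy)) L
    · intro x hx y hy L
      exact one_le_wkSum_real (fun _ => le_refl 1)
        (fun h => Set.disjoint_left.mp hAC hx (by rw [h]; exact hy)) L
    · intro x hx y hy L
      exact one_le_wkSum_real (fun _ => le_refl 1)
        (fun h => Set.disjoint_left.mp hBC hx (by rw [h]; exact hy)) L
  obtain ⟨rA, hcutA, hvalA⟩ := minCut_attained (G := G) w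
    (Set.disjoint_union_right.2 ⟨hAB, hAC⟩)
  obtain ⟨rB, hcutB, hvalB⟩ := minCut_attained (G := G) w
    (Set.disjoint_union_right.2 ⟨hAB.symm, hBC⟩)
  obtain ⟨rC, hcutC, hvalC⟩ := minCut_attained (G := G) w
    (Set.disjoint_union_right.2 ⟨hAC.symm, hBC.symm⟩)
  apply le_antisymm
  · -- LP value ≤ half the sum of the three minimal cuts
    classical
    have hind0 : ∀ (r : Set V) (e : Sym2 V), (0:ℝ) ≤ if e ∈ mu G r then (1:ℝ) else 0 := by
      intro r e
      split_ifs <;> norm_num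
    set iA : Sym2 V → ℝ := fun e => if e ∈ mu G rA then (1:ℝ) else 0 with hiAdef
    set iB : Sym2 V → ℝ := fun e => if e ∈ mu G rB then (1:ℝ) else 0 with hiBdef
    set iC : Sym2 V → ℝ := fun e => if e ∈ mu G rC then (1:ℝ) else 0 with hiCdef
    have hiA0 : ∀ e, 0 ≤ iA e := fun e => hind0 rA e
    have hiB0 : ∀ e, 0 ≤ iB e := fun e => hind0 rB e
    have hiC0 : ∀ e, 0 ≤ iC e := fun e => hind0 rC e
    set ρ : Sym2 V → ℝ := fun e => (iA e + iB e + iC e) / 2 with hρdef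
    have hone : ∀ (r : Set V) {x y : V}, x ∈ r → y ∉ r → ∀ L : G.Walk x y,
        1 ≤ wkSum (fun e => if e ∈ mu G r then (1:ℝ) else 0) L := by
      intro r x y hx hy L
      obtain ⟨e, heL, heμ⟩ := crossing hx hy L
      calc (1:ℝ) = (if e ∈ mu G r then (1:ℝ) else 0) := by simp [heμ]
        _ ≤ _ := le_wkSum' (f := fun e => if e ∈ mu G r then (1:ℝ) else 0)
            (hind0 r) L heL
    have hone' : ∀ (r : Set V) {x y : V}, x ∉ r → y ∈ r → ∀ L : G.Walk x y,
        1 ≤ wkSum (fun e => if e ∈ mu G r then (1:ℝ) else 0) L := by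
      intro r x y hx hy L
      have := hone r hy hx L.reverse
      rwa [wkSum_reverse] at this
    apply csInf_le lpBdd
    refine ⟨ρ, fun e => by
      have := hiA0 e; have := hiB0 e; have := hiC0 e
      rw [hρdef]; dsimp only; linarith, ⟨?_, ?_, ?_⟩, ?_⟩
    · intro x hx y hy L
      rw [hρdef, wkSum_avg3]
      have h1 := hone rA (hcutA.1 hx) (hcutA.2 (Or.inl hy)) L
      have h2 := hone' rB (hcutB.2 (Or.inl hx)) (hcutB.1 hy) L
      have h3 := wkSum_nonneg' hiC0 L
      rw [← hiAdef] at h1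
      rw [← hiBdef] at h2
      linarith
    · intro x hx y hy L
      rw [hρdef, wkSum_avg3]
      have h1 := hone rA (hcutA.1 hx) (hcutA.2 (Or.inr hy)) L
      have h2 := hone' rC (hcutC.2 (Or.inl hx)) (hcutC.1 hy) L
      have h3 := wkSum_nonneg' hiB0 L
      rw [← hiAdef] at h1
      rw [← hiCdef] at h2
      linarith
    · intro x hx y hy L
      rw [hρdef, wkSum_avg3]
      have h1 := hone rB (hcutB.1 hx) (hcutB.2 (Or.inr hy)) L
      have h2 := hone' rC (hcutC.2 (Or.inr hx)) (hcutC.1 hy) L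
      have h3 := wkSum_nonneg' hiA0 L
      rw [← hiBdef] at h1
      rw [← hiCdef] at h2
      linarith
    · rw [hvalA, hvalB, hvalC]
      have hstep : wsum (fun e => w e * ρ e) G.edgeSet =
          wsum (fun e => (w e * iA e + w e * iB e + w e * iC e) / 2) G.edgeSet :=
        wsum_congr (fun e => by rw [hρdef]; ring) _
      rw [hstep, wsum_avg3, hiAdef, hiBdef, hiCdef,
        wsum_indicator (fun e (he : e ∈ mu G rA) => he.1) w,
        wsum_indicator (fun e (he : e ∈ mu G rB) => he.1) w,
        wsum_indicator (fun e (he : e ∈ mu G rC) => he.1) w]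
  · -- half the sum of the cuts ≤ LP value
    apply le_csInf lpNE
    rintro a ⟨ρ, hρ0, ⟨hcAB, hcAC, hcBC⟩, rfl⟩
    have sAB : Sep G ρ A B := hcAB
    have sAC : Sep G ρ A C := hcAC
    have sBC : Sep G ρ B C := hcBC
    have mcBdd : ∀ X Y : Set V,
        BddBelow {a | ∃ r : Set V, IsCut X Y r ∧ a = wsum w (mu G r)} := by
      intro X Y
      refine ⟨0, ?_⟩
      rintro a ⟨r, -, rfl⟩
      exact wsum_nonneg hw _
    have hcutT : ∀ (X Y₁ Y₂ : Set V), Sep G ρ X Y₁ → Sep G ρ X Y₂ →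
        ∀ t ∈ Set.Ioo (0:ℝ) (1/2),
        minCut G w X (Y₁ ∪ Y₂) ≤ wsum w (mu G {v | dd G ρ X v ≤ t}) := by
      intro X Y₁ Y₂ h1 h2 t ht
      apply csInf_le (mcBdd _ _)
      refine ⟨{v | dd G ρ X v ≤ t}, ⟨fun x hx => ?_, fun y hy => ?_⟩, rfl⟩
      · show dd G ρ X x ≤ t
        rw [dd_of_mem hρ0 hx]
        exact ht.1.le
      · show ¬ dd G ρ X y ≤ t
        intro hle
        rcases hy with hy | hy
        · have := dd_half_of_target h1 hy
          linarith [ht.2]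
        · have := dd_half_of_target h2 hy
          linarith [ht.2]
    obtain ⟨EF, hEFmem, hEFsum⟩ := wsum_spec (V := V) G.edgeSet
    set F : Fin 3 → V → ℝ := ![dd G ρ A, dd G ρ B, dd G ρ C] with hF
    have hF0 : ∀ (j : Fin 3) (u : V), 0 ≤ F j u := by
      intro j u
      fin_cases j <;>
        simp only [hF, Matrix.cons_val_zero, Matrix.cons_val_one, Matrix.head_cons,
          Matrix.cons_val_two, Matrix.tail_cons] <;>
        exact dd_nonneg hρ0 u
    have hFhalf : ∀ (j : Fin 3) (u : V), F j u ≤ 1/2 := by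
      intro j u
      fin_cases j <;>
        simp only [hF, Matrix.cons_val_zero, Matrix.cons_val_one, Matrix.head_cons,
          Matrix.cons_val_two, Matrix.tail_cons] <;>
        exact dd_le_half hρ0 u
    have havg := avg_bound ((Finset.univ : Finset (Fin 3)) ×ˢ EF)
      (by norm_num : (0:ℝ) < 1/2)
      (fun p => s2min (F p.1) p.2) (fun p => s2max (F p.1) p.2) (fun p => w p.2)
      (fun p _ => hw p.2)
      (fun p _ => by
        obtain ⟨j, e⟩ := p
        dsimp only
        induction e using Sym2.inductionOn with
        | hf u v =>
          simp only [s2min, Sym2.lift_mk]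
          exact le_min (hF0 j u) (hF0 j v))
      (fun p _ => by
        obtain ⟨j, e⟩ := p
        dsimp only
        induction e using Sym2.inductionOn with
        | hf u v =>
          simp only [s2min, s2max, Sym2.lift_mk]
          exact min_le_max)
      (fun p _ => by
        obtain ⟨j, e⟩ := p
        dsimp only
        induction e using Sym2.inductionOn with
        | hf u v =>
          simp only [s2max, Sym2.lift_mk]
          exact max_le (hFhalf j u) (hFhalf j v))
      (minCut G w A (B ∪ C) + minCut G w B (A ∪ C) + minCut G w C (A ∪ B))
      ?_
    · -- conclude from the averaged bound
      rw [Finset.sum_product] at havg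
      rw [Fin.sum_univ_three] at havg
      simp only [hF, Matrix.cons_val_zero, Matrix.cons_val_one, Matrix.head_cons,
        Matrix.cons_val_two, Matrix.tail_cons] at havg
      rw [← Finset.sum_add_distrib, ← Finset.sum_add_distrib] at havg
      have hkey : ∀ e : Sym2 V, e ∈ G.edgeSet →
          w e * (s2max (dd G ρ A) e - s2min (dd G ρ A) e) +
            w e * (s2max (dd G ρ B) e - s2min (dd G ρ B) e) +
            w e * (s2max (dd G ρ C) e - s2min (dd G ρ C) e) ≤ w e * ρ e := by
        intro e
        induction e using Sym2.inductionOn with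
        | hf u v =>
          intro heE
          have hadj : G.Adj u v := (SimpleGraph.mem_edgeSet G).mp heE
          have hk : |dd G ρ A u - dd G ρ A v| + |dd G ρ B u - dd G ρ B v| +
              |dd G ρ C u - dd G ρ C v| ≤ ρ s(u, v) :=
            key_arith (dd_le_half hρ0 u) (dd_le_half hρ0 v) (dd_le_half hρ0 u)
              (dd_le_half hρ0 v) (dd_le_half hρ0 u) (dd_le_half hρ0 v) (hρ0 _)
              (dd_lip_abs hρ0 hadj) (dd_lip_abs hρ0 hadj) (dd_lip_abs hρ0 hadj)
              (dd_sep_vertex hρ0 sAB u) (dd_sep_vertex hρ0 sAC u)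
              (dd_sep_vertex hρ0 sBC u) (dd_sep_vertex hρ0 sAB v)
              (dd_sep_vertex hρ0 sAC v) (dd_sep_vertex hρ0 sBC v)
              (dd_sep_edge hρ0 sAB hadj) (dd_sep_edge hρ0 sAB.symm hadj)
              (dd_sep_edge hρ0 sAC hadj) (dd_sep_edge hρ0 sAC.symm hadj)
              (dd_sep_edge hρ0 sBC hadj) (dd_sep_edge hρ0 sBC.symm hadj)
          have hms : ∀ f : V → ℝ, s2max f s(u, v) - s2min f s(u, v) = |f u - f v| := by
            intro f
            simp only [s2min, s2max, Sym2.lift_mk]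
            exact max_sub_min_eq_abs' _ _
          rw [hms, hms, hms, ← mul_add, ← mul_add]
          exact mul_le_mul_of_nonneg_left hk (hw _)
      have hfin : ∑ e ∈ EF,
          (w e * (s2max (dd G ρ A) e - s2min (dd G ρ A) e) +
           w e * (s2max (dd G ρ B) e - s2min (dd G ρ B) e) +
           w e * (s2max (dd G ρ C) e - s2min (dd G ρ C) e))
          ≤ wsum (fun e => w e * ρ e) G.edgeSet := by
        rw [hEFsum]
        apply Finset.sum_le_sum
        intro e he
        exact hkey e ((hEFmem e).mp he)
      have := le_trans havg hfin
      linarith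
    · -- the pointwise cut bound for each threshold
      intro t ht
      have h1 := hcutT A B C sAB sAC t ht
      have h2 := hcutT B A C sAB.symm sBC t ht
      have h3 := hcutT C A B sAC.symm sBC.symm t ht
      rw [wsum_mu_threshold w (dd G ρ A) t, hEFsum] at h1
      rw [wsum_mu_threshold w (dd G ρ B) t, hEFsum] at h2
      rw [wsum_mu_threshold w (dd G ρ C) t, hEFsum] at h3
      rw [Finset.sum_product, Fin.sum_univ_three]
      simp only [hF, Matrix.cons_val_zero, Matrix.cons_val_one, Matrix.head_cons,
        Matrix.cons_val_two, Matrix.tail_cons]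
      linarith
end RTN

/-- (i) The integer program `min Σ_e w(e)ρ(e)` over `ρ : E → ℤ_{≥0}`
subject to `ρ(L) ≥ 1` for every path `L` between two distinct boundary components has
optimal value the minimal triway cut area with unit tensions; (ii) its linear relaxation
has optimal value `½(𝒜(A:B∪C) + 𝒜(B:A∪C) + 𝒜(C:A∪B))`. -/
theorem multiway_cut_integer_program_and_relaxation {V : Type*} [Fintype V]
    (G : SimpleGraph V) (w : Sym2 V → ℝ) (hw : ∀ e, 0 ≤ w e)
    (A B C : Set V) (hbdy : RTN.Bdy A B C)
    (hcomp : ∀ v : V, ∃ b ∈ A ∪ B ∪ C, G.Reachable v b)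
    (n : ℕ) (hn : 2 ≤ n) :
    sInf {a | ∃ ρ : Sym2 V → ℕ,
        ((∀ x ∈ A, ∀ y ∈ B, ∀ L : G.Walk x y,
            1 ≤ RTN.wkSum (fun e => (ρ e : ℤ)) L) ∧
         (∀ x ∈ A, ∀ y ∈ C, ∀ L : G.Walk x y,
            1 ≤ RTN.wkSum (fun e => (ρ e : ℤ)) L) ∧
         (∀ x ∈ B, ∀ y ∈ C, ∀ L : G.Walk x y,
            1 ≤ RTN.wkSum (fun e => (ρ e : ℤ)) L)) ∧
        a = RTN.wsum (fun e => w e * (ρ e : ℝ)) G.edgeSet}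
      = RTN.triCut G w 1 1 1 A B C ∧
    sInf {a | ∃ ρ : Sym2 V → ℝ, (∀ e, 0 ≤ ρ e) ∧
        ((∀ x ∈ A, ∀ y ∈ B, ∀ L : G.Walk x y, 1 ≤ RTN.wkSum ρ L) ∧
         (∀ x ∈ A, ∀ y ∈ C, ∀ L : G.Walk x y, 1 ≤ RTN.wkSum ρ L) ∧
         (∀ x ∈ B, ∀ y ∈ C, ∀ L : G.Walk x y, 1 ≤ RTN.wkSum ρ L)) ∧
        a = RTN.wsum (fun e => w e * ρ e) G.edgeSet}
      = (RTN.minCut G w A (B ∪ C) + RTN.minCut G w B (A ∪ C)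
          + RTN.minCut G w C (A ∪ B)) / 2 := by
  obtain ⟨hAB, hAC, hBC⟩ := hbdy
  exact ⟨RTN.part_one hw hAB hAC hBC, RTN.part_two hw hAB hAC hBC⟩
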